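/- arXiv:1412.2089 — 5 statements merged into one kernel-verified Lean document; each statement's English description precedes it below -/
import Mathlib

section
/- Let G be a group, A a G-module with no 2-torsion (₂A = 0), and n ≥ 1. If σ : Gⁿ → A is a symmetric n-cochain (invariant under the Σ_{n+1}-action), then σ is normalized: σ(g₁,…,gₙ) = 0 whenever some gᵢ = 1. -/
variable {G A : Type*}

/-- The `i`-th face map used in the group cohomology differential: merge
entries `i` and `i+1` of `g` by multiplication. -/
def coface [Group G] {n : ℕ} (i : Fin n) (g : Fin (n + 1) → G) : Fin n → G :=
  fun j => if (j : ℕ) < (i : ℕ) then g j.castSucc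
           else if j = i then g i.castSucc * g i.succ
           else g j.succ

/-- The standard inhomogeneous group cohomology differential
`∂ⁿ : Cⁿ(G,A) → Cⁿ⁺¹(G,A)`. -/
def diff [Group G] [AddCommGroup A] [DistribMulAction G A] (n : ℕ)
    (σ : (Fin n → G) → A) : (Fin (n + 1) → G) → A :=
  fun g => g 0 • σ (fun j => g j.succ)
    + ∑ i : Fin n, ((-1 : ℤ) ^ ((i : ℕ) + 1)) • σ (coface i g)
    + ((-1 : ℤ) ^ (n + 1)) • σ (fun j => g j.castSucc)

/-- Staic's action of the transposition `(p+1, p+2)` (1-indexed) on `n`-cochains. -/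
def swapAct [Group G] [AddCommGroup A] [DistribMulAction G A] {n : ℕ} (p : Fin n)
    (σ : (Fin n → G) → A) : (Fin n → G) → A :=
  fun g =>
    if (p : ℕ) = 0 then
      -(g p • σ (fun j => if (j : ℕ) = 0 then (g j)⁻¹
                          else if (j : ℕ) = 1 then g p * g j else g j))
    else
      -σ (fun j => if (j : ℕ) + 1 = (p : ℕ) then g j * g p
                   else if j = p then (g j)⁻¹
                   else if (j : ℕ) = (p : ℕ) + 1 then g p * g j else g j)

/-- A symmetric `n`-cochain: one invariant under Staic's `Σ_{n+1}`-action,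
i.e. fixed by each generating transposition. -/
def IsSymmCochain [Group G] [AddCommGroup A] [DistribMulAction G A] {n : ℕ}
    (σ : (Fin n → G) → A) : Prop :=
  ∀ (p : Fin n) (g : Fin n → G), σ g = swapAct p σ g

/-- A normalized cochain: vanishes whenever some argument is `1`. -/
def IsNormalized [Group G] [AddCommGroup A] {n : ℕ} (σ : (Fin n → G) → A) : Prop :=
  ∀ g : Fin n → G, (∃ i, g i = 1) → σ g = 0

/-- The `(∗)` conditions: `σ` vanishes whenever two consecutive arguments are
mutually inverse. -/
def SatisfiesStar [Group G] [AddCommGroup A] {n : ℕ} (σ : (Fin n → G) → A) : Prop :=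
  ∀ (p : ℕ) (hp : p + 1 < n) (g : Fin n → G),
    g ⟨p + 1, hp⟩ = (g ⟨p, Nat.lt_of_succ_lt hp⟩)⁻¹ → σ g = 0

/-- If `₂A = 0` and `n ≥ 1`, then every symmetric `n`-cochain is normalized:
it vanishes whenever some argument equals `1`. -/
theorem isSymmCochain_normalized [Group G] [AddCommGroup A] [DistribMulAction G A]
    {n : ℕ} (hn : 1 ≤ n) (h2 : ∀ a : A, a + a = 0 → a = 0)
    (σ : (Fin n → G) → A) (hσ : IsSymmCochain σ) :
    IsNormalized σ := by
  rintro g ⟨i, hi⟩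
  have h := hσ i g
  unfold swapAct at h
  by_cases hp : (i : ℕ) = 0
  · rw [if_pos hp] at h
    have hfun : (fun j : Fin n => if (j : ℕ) = 0 then (g j)⁻¹
        else if (j : ℕ) = 1 then g i * g j else g j) = g := by
      funext j
      by_cases h0 : (j : ℕ) = 0
      · have : j = i := Fin.ext (by rw [h0, hp])
        rw [if_pos h0, this, hi, inv_one]
      · rw [if_neg h0]
        by_cases h1 : (j : ℕ) = 1
        · rw [if_pos h1, hi, one_mul]
        · rw [if_neg h1]
    rw [hfun, hi, one_smul] at h
    refine h2 _ ?_
    nth_rewrite 1 [h]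
    exact neg_add_cancel _
  · rw [if_neg hp] at h
    have hfun : (fun j : Fin n => if (j : ℕ) + 1 = (i : ℕ) then g j * g i
        else if j = i then (g j)⁻¹
        else if (j : ℕ) = (i : ℕ) + 1 then g i * g j else g j) = g := by
      funext j
      by_cases h0 : (j : ℕ) + 1 = (i : ℕ)
      · rw [if_pos h0, hi, mul_one]
      · rw [if_neg h0]
        by_cases h1 : j = i
        · rw [if_pos h1, h1, hi, inv_one]
        · rw [if_neg h1]
          by_cases h3 : (j : ℕ) = (i : ℕ) + 1
          · rw [if_pos h3, hi, one_mul]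
          · rw [if_neg h3]
    rw [hfun] at h
    refine h2 _ ?_
    nth_rewrite 1 [h]
    exact neg_add_cancel _
end

section
/- Let G be a group and A a G-module with ₂A = 0. A 2-cochain σ : G × G → A is a symmetric 2-cocycle if and only if σ is a 2-cocycle (satisfying the usual cocycle condition g₁·σ(g₂,g₃) - σ(g₁g₂,g₃) + σ(g₁,g₂g₃) - σ(g₁,g₂) = 0) which is normalized and satisfies σ(g, g⁻¹) = 0 for all g ∈ G. -/
/-- For a `G`-module `A` with `₂A = 0`: a 2-cochain `σ` is a symmetric 2-cocycle
(i.e. a 2-cocycle satisfying `σ(g₁,g₂) = -g₁ • σ(g₁⁻¹, g₁g₂)` and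
`σ(g₁,g₂) = -σ(g₁g₂, g₂⁻¹)`) if and only if it is a normalized 2-cocycle with
`σ(g, g⁻¹) = 0` for all `g`. -/
theorem symmetric_two_cocycle_iff {G A : Type*} [Group G] [AddCommGroup A]
    [DistribMulAction G A] (h2 : ∀ a : A, a + a = 0 → a = 0) (σ : G → G → A) :
    ((∀ g₁ g₂ : G, σ g₁ g₂ = -(g₁ • σ g₁⁻¹ (g₁ * g₂))) ∧
     (∀ g₁ g₂ : G, σ g₁ g₂ = -σ (g₁ * g₂) g₂⁻¹) ∧
     (∀ g₁ g₂ g₃ : G, g₁ • σ g₂ g₃ - σ (g₁ * g₂) g₃ + σ g₁ (g₂ * g₃) - σ g₁ g₂ = 0)) ↔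
    ((∀ g₁ g₂ g₃ : G, g₁ • σ g₂ g₃ - σ (g₁ * g₂) g₃ + σ g₁ (g₂ * g₃) - σ g₁ g₂ = 0) ∧
     (∀ g : G, σ g 1 = 0 ∧ σ 1 g = 0) ∧
     (∀ g : G, σ g g⁻¹ = 0)) := by
  constructor
  · rintro ⟨h1, hs2, hc⟩
    have hright : ∀ g : G, σ g 1 = 0 := by
      intro g
      have := hs2 g 1
      simp at this
      exact h2 _ (by nth_rewrite 2 [this]; abel)
    have hleft : ∀ g : G, σ 1 g = 0 := by
      intro g
      have := h1 1 g
      simp at this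
      exact h2 _ (by nth_rewrite 2 [this]; abel)
    refine ⟨hc, fun g => ⟨hright g, hleft g⟩, fun g => ?_⟩
    have := hs2 g g⁻¹
    simp [hleft] at this
    exact this
  · rintro ⟨hc, hn, hinv⟩
    refine ⟨fun g₁ g₂ => ?_, fun g₁ g₂ => ?_, hc⟩
    · have := hc g₁ g₁⁻¹ (g₁ * g₂)
      simp [hinv, (hn _).2] at this
      exact eq_neg_of_add_eq_zero_left (by rw [add_comm]; exact this)
    · have := hc g₁ g₂ g₂⁻¹
      simp [hinv, (hn _).1, smul_zero] at this
      have h' : -(σ g₁ g₂ + σ (g₁ * g₂) g₂⁻¹) = 0 := by rw [← this]; abel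
      exact eq_neg_of_add_eq_zero_left (neg_eq_zero.mp h')
end

section
/- Let G be a group, A a G-module with ₂A = 0, and n ≥ 1. A map σ : Gⁿ → A is a symmetric n-cocycle if and only if σ is a normalized n-cocycle satisfying the (∗) conditions: σ(g₁, g₁⁻¹, g₃,…,gₙ) = 0; σ(g₁,…,g_{i-1}, gᵢ, gᵢ⁻¹, g_{i+2},…,gₙ) = 0 for 1 < i < n; and σ(g₁,…,g_{n-2}, gₙ, gₙ⁻¹) = 0, for all g₁,…,gₙ ∈ G. -/
variable {G A : Type*}

section AuxDefs
variable [Group G] {n : ℕ}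

/-- Extend a tuple `g : Fin n → G` to all of `ℕ` by `1`. -/
def gext (g : Fin n → G) : ℕ → G := fun k => if hk : k < n then g ⟨k, hk⟩ else 1

/-- The auxiliary `(n+1)`-tuple `(g₀,…,g_q, g_q⁻¹, g_q g_{q+1}, g_{q+1},…)`
(as a function on `ℕ`). -/
def htup (g : Fin n → G) (q : ℕ) : ℕ → G := fun k =>
  if k ≤ q then gext g k
  else if k = q + 1 then (gext g q)⁻¹
  else if k = q + 2 then gext g q * gext g (q + 1)
  else gext g (k - 1)

lemma gext_lt (g : Fin n → G) {k : ℕ} (h : k < n) : gext g k = g ⟨k, h⟩ := dif_pos h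

lemma htup_le (g : Fin n → G) {q k : ℕ} (h : k ≤ q) : htup g q k = gext g k := if_pos h

lemma htup_q1 (g : Fin n → G) (q : ℕ) : htup g q (q + 1) = (gext g q)⁻¹ := by
  simp only [htup]; rw [if_neg (by omega), if_pos trivial]

lemma htup_q2 (g : Fin n → G) (q : ℕ) : htup g q (q + 2) = gext g q * gext g (q + 1) := by
  simp only [htup]; rw [if_neg (by omega), if_neg (by omega), if_pos trivial]

lemma htup_ge (g : Fin n → G) {q k : ℕ} (h : q + 3 ≤ k) : htup g q k = gext g (k - 1) := by
  simp only [htup]; rw [if_neg (by omega), if_neg (by omega), if_neg (by omega)]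


end AuxDefs

section Cof
variable [Group G] {n : ℕ}

lemma coface_htup (g : Fin n → G) (q v : ℕ) (i : Fin n) (hv : v < n) :
    coface i (fun j : Fin (n + 1) => htup g q (j : ℕ)) ⟨v, hv⟩ =
      if v < (i : ℕ) then htup g q v
      else if v = (i : ℕ) then htup g q (i : ℕ) * htup g q ((i : ℕ) + 1)
      else htup g q (v + 1) := by
  simp only [coface, Fin.ext_iff, Fin.val_mk, Fin.coe_castSucc, Fin.val_succ]

end Cof

/-- For `₂A = 0` and `n ≥ 1`: a map `σ : Gⁿ → A` is a symmetric `n`-cocycle if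
and only if it is a normalized `n`-cocycle satisfying the `(∗)` conditions. -/
theorem symmetric_cocycle_iff_normalized_star [Group G] [AddCommGroup A]
    [DistribMulAction G A] {n : ℕ} (hn : 1 ≤ n)
    (h2 : ∀ a : A, a + a = 0 → a = 0) (σ : (Fin n → G) → A) :
    (IsSymmCochain σ ∧ diff n σ = 0) ↔
      (diff n σ = 0 ∧ IsNormalized σ ∧ SatisfiesStar σ) := by
  constructor
  · rintro ⟨hsym, hd⟩
    have hNorm : IsNormalized σ := by
      rintro g ⟨k, hk⟩
      have h := hsym k g
      rw [swapAct] at h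
      apply h2
      by_cases hk0 : (k : ℕ) = 0
      · rw [if_pos hk0] at h
        have hfix : (fun j : Fin n => if (j : ℕ) = 0 then (g j)⁻¹
            else if (j : ℕ) = 1 then g k * g j else g j) = g := by
          funext j
          split_ifs with h1 hb
          · have : j = k := Fin.ext (by omega)
            rw [this, hk, inv_one]
          · rw [hk, one_mul]
          · rfl
        rw [hfix, hk, one_smul] at h
        nth_rewrite 2 [h]
        exact add_neg_cancel _
      · rw [if_neg hk0] at h
        have hfix : (fun j : Fin n => if (j : ℕ) + 1 = (k : ℕ) then g j * g k
            else if j = k then (g j)⁻¹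
            else if (j : ℕ) = (k : ℕ) + 1 then g k * g j else g j) = g := by
          funext j
          split_ifs with h1 hb hc
          · rw [hk, mul_one]
          · rw [hb, hk, inv_one]
          · rw [hk, one_mul]
          · rfl
        rw [hfix] at h
        nth_rewrite 2 [h]
        exact add_neg_cancel _
    have hStar : SatisfiesStar σ := by
      intro p hp g hg
      have h := hsym ⟨p + 1, hp⟩ g
      rw [swapAct, if_neg (by simp)] at h
      refine h.trans ?_
      rw [hNorm _ ⟨⟨p, Nat.lt_of_succ_lt hp⟩, ?_⟩, neg_zero]
      rw [if_pos (by simp), hg, mul_inv_cancel]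
    exact ⟨hd, hNorm, hStar⟩
  · rintro ⟨hd, hN, hS⟩
    refine ⟨?_, hd⟩
    intro p g
    have hq := p.isLt
    have hdh := congrFun hd (fun j : Fin (n + 1) => htup g (p : ℕ) (j : ℕ))
    simp only [diff, Pi.zero_apply, Fin.val_succ, Fin.coe_castSucc, Fin.val_zero] at hdh
    -- vanishing of most terms of the sum
    have hterm : ∀ i : Fin n, (i : ℕ) ≠ (p : ℕ) + 1 → (i : ℕ) + 1 ≠ (p : ℕ) →
        ((-1 : ℤ) ^ ((i : ℕ) + 1)) • σ (coface i (fun j : Fin (n + 1) => htup g (p : ℕ) (j : ℕ))) = 0 := by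
      intro i hi1 hi2
      obtain ⟨v, hv⟩ := i
      simp only [Fin.val_mk] at hi1 hi2 ⊢
      rcases Nat.lt_trichotomy v (p : ℕ) with hlt | heq | hgt
      · -- v < p, in fact v + 2 ≤ p : star at p-1
        have hz : σ (coface (⟨v, hv⟩ : Fin n) (fun j : Fin (n + 1) => htup g (p : ℕ) (j : ℕ))) = 0 := by
          apply hS ((p : ℕ) - 1) (by omega)
          rw [coface_htup, coface_htup]
          simp only [Fin.val_mk]
          rw [if_neg (by omega), if_neg (by omega), if_neg (by omega), if_neg (by omega)]
          rw [show (p : ℕ) - 1 + 1 = (p : ℕ) from by omega]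
          rw [htup_q1, htup_le g (le_refl _)]
        rw [hz, smul_zero]
      · -- v = p : normalized, position v carries 1
        subst heq
        have hz : σ (coface (⟨(p : ℕ), hv⟩ : Fin n) (fun j : Fin (n + 1) => htup g (p : ℕ) (j : ℕ))) = 0 := by
          apply hN
          refine ⟨⟨(p : ℕ), hv⟩, ?_⟩
          rw [coface_htup]
          simp only [Fin.val_mk]
          rw [if_neg (by omega), if_pos trivial, htup_le g (le_refl _), htup_q1, mul_inv_cancel]
        rw [hz, smul_zero]
      · -- v > p, in fact v ≥ p + 2 : star at p
        have hz : σ (coface (⟨v, hv⟩ : Fin n) (fun j : Fin (n + 1) => htup g (p : ℕ) (j : ℕ))) = 0 := by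
          apply hS (p : ℕ) (by omega)
          rw [coface_htup, coface_htup]
          simp only [Fin.val_mk]
          rw [if_pos (by omega), if_pos (by omega)]
          rw [htup_q1, htup_le g (le_refl _)]
        rw [hz, smul_zero]
    by_cases hq0 : (p : ℕ) = 0
    · -- first transposition
      simp only [swapAct]
      rw [if_pos hq0]
      have h00 : htup g (p : ℕ) 0 = g p := by
        rw [htup_le g (Nat.zero_le _), gext_lt g (show 0 < n by omega)]
        exact congrArg g (Fin.ext (by simp only [Fin.val_mk]; omega))
      have hSG : (fun j : Fin n => htup g (p : ℕ) (↑j + 1)) =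
          (fun j : Fin n => if (j : ℕ) = 0 then (g j)⁻¹
            else if (j : ℕ) = 1 then g p * g j else g j) := by
        funext j; obtain ⟨v, hv⟩ := j
        simp only [Fin.val_mk]
        split_ifs with h1 hx
        · subst h1
          rw [show (0 : ℕ) + 1 = (p : ℕ) + 1 from by omega, htup_q1, gext_lt g hq]
          exact congrArg (·⁻¹) (congrArg g (Fin.ext (by simp only [Fin.val_mk]; omega)))
        · subst hx
          rw [show (1 : ℕ) + 1 = (p : ℕ) + 2 from by omega, htup_q2, gext_lt g hq,
            gext_lt g (show (p : ℕ) + 1 < n by omega)]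
          congr 1 <;> exact congrArg g (Fin.ext (by simp only [Fin.val_mk]; omega))
        · rw [htup_ge g (by omega), show v + 1 - 1 = v from by omega, gext_lt g hv]
      rw [h00, hSG] at hdh
      by_cases hb : (p : ℕ) + 1 < n
      · have hcofb : coface (⟨(p : ℕ) + 1, hb⟩ : Fin n)
            (fun j : Fin (n + 1) => htup g (p : ℕ) (j : ℕ)) = g := by
          funext j; obtain ⟨v, hv⟩ := j
          rw [coface_htup]
          simp only [Fin.val_mk]
          split_ifs with h1 hx
          · rw [htup_le g (by omega), gext_lt g hv]
          · subst hx
            rw [htup_q1, show (p : ℕ) + 1 + 1 = (p : ℕ) + 2 from by omega, htup_q2,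
              inv_mul_cancel_left, gext_lt g (show (p : ℕ) + 1 < n by omega)]
          · rw [htup_ge g (by omega), show v + 1 - 1 = v from by omega, gext_lt g hv]
        have hsum : ∑ i : Fin n, ((-1 : ℤ) ^ ((i : ℕ) + 1)) •
            σ (coface i (fun j : Fin (n + 1) => htup g (p : ℕ) (j : ℕ))) = σ g := by
          rw [Finset.sum_eq_single_of_mem (⟨(p : ℕ) + 1, hb⟩ : Fin n) (Finset.mem_univ _) ?_]
          · rw [hcofb]
            simp only [Fin.val_mk]
            rw [hq0]
            norm_num
          · intro i _ hi
            refine hterm i ?_ (by omega)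
            intro h
            exact hi (Fin.ext (by simp only [Fin.val_mk]; omega))
        have hinit : σ (fun j : Fin n => htup g (p : ℕ) (j : ℕ)) = 0 := by
          apply hS (p : ℕ) hb
          simp only [Fin.val_mk]
          rw [htup_q1, htup_le g (le_refl _)]
        rw [hsum, hinit, smul_zero, add_zero] at hdh
        exact eq_neg_of_add_eq_zero_right hdh
      · have hsum : ∑ i : Fin n, ((-1 : ℤ) ^ ((i : ℕ) + 1)) •
            σ (coface i (fun j : Fin (n + 1) => htup g (p : ℕ) (j : ℕ))) = 0 :=
          Finset.sum_eq_zero (fun i _ => hterm i (by have := i.isLt; omega) (by omega))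
        have hinitg : (fun j : Fin n => htup g (p : ℕ) (j : ℕ)) = g := by
          funext j; obtain ⟨v, hv⟩ := j
          simp only [Fin.val_mk]
          rw [htup_le g (by omega), gext_lt g hv]
        have hsgn : ((-1 : ℤ)) ^ (n + 1) = 1 := by
          rw [show n + 1 = 2 from by omega]; norm_num
        rw [hsum, add_zero, hinitg, hsgn, one_smul] at hdh
        exact eq_neg_of_add_eq_zero_right hdh
    · -- other transpositions
      simp only [swapAct]
      rw [if_neg hq0]
      have htail0 : σ (fun j : Fin n => htup g (p : ℕ) (↑j + 1)) = 0 := by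
        apply hS ((p : ℕ) - 1) (by omega)
        simp only [Fin.val_mk]
        rw [show (p : ℕ) - 1 + 1 = (p : ℕ) from by omega, htup_q1, htup_le g (le_refl _)]
      have hcofa : coface (⟨(p : ℕ) - 1, by omega⟩ : Fin n)
          (fun j : Fin (n + 1) => htup g (p : ℕ) (j : ℕ)) =
          (fun j : Fin n => if (j : ℕ) + 1 = (p : ℕ) then g j * g p
            else if j = p then (g j)⁻¹
            else if (j : ℕ) = (p : ℕ) + 1 then g p * g j else g j) := by
        funext j; obtain ⟨v, hv⟩ := j
        rw [coface_htup]
        simp only [Fin.val_mk, Fin.ext_iff]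
        split_ifs <;>
          first
          | (exfalso; omega)
          | (rw [htup_le g (show v ≤ (p : ℕ) from by omega), gext_lt g hv])
          | (rw [htup_le g (show (p : ℕ) - 1 ≤ (p : ℕ) from by omega),
              htup_le g (show (p : ℕ) - 1 + 1 ≤ (p : ℕ) from by omega),
              gext_lt g (show (p : ℕ) - 1 < n from by omega),
              gext_lt g (show (p : ℕ) - 1 + 1 < n from by omega)];
              congr 1 <;> exact congrArg g (Fin.ext (by simp only [Fin.val_mk]; omega)))
          | (rw [show v + 1 = (p : ℕ) + 1 from by omega, htup_q1, gext_lt g hq];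
              exact congrArg (·⁻¹) (congrArg g (Fin.ext (by simp only [Fin.val_mk]; omega))))
          | (rw [show v + 1 = (p : ℕ) + 2 from by omega, htup_q2, gext_lt g hq,
              gext_lt g (show (p : ℕ) + 1 < n from by omega)];
              congr 1 <;> exact congrArg g (Fin.ext (by simp only [Fin.val_mk]; omega)))
          | (rw [htup_ge g (show (p : ℕ) + 3 ≤ v + 1 from by omega),
              show v + 1 - 1 = v from by omega, gext_lt g hv])
      by_cases hb : (p : ℕ) + 1 < n
      · -- middle transpositions
        have hcofb : coface (⟨(p : ℕ) + 1, hb⟩ : Fin n)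
            (fun j : Fin (n + 1) => htup g (p : ℕ) (j : ℕ)) = g := by
          funext j; obtain ⟨v, hv⟩ := j
          rw [coface_htup]
          simp only [Fin.val_mk]
          split_ifs with h1 hx
          · rw [htup_le g (by omega), gext_lt g hv]
          · subst hx
            rw [htup_q1, show (p : ℕ) + 1 + 1 = (p : ℕ) + 2 from by omega, htup_q2,
              inv_mul_cancel_left, gext_lt g (show (p : ℕ) + 1 < n by omega)]
          · rw [htup_ge g (by omega), show v + 1 - 1 = v from by omega, gext_lt g hv]
        have hab : (⟨(p : ℕ) - 1, (show (p : ℕ) - 1 < n from by omega)⟩ : Fin n) ≠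
            ⟨(p : ℕ) + 1, hb⟩ := by
          intro h
          have := congrArg Fin.val h
          simp only [Fin.val_mk] at this
          omega
        have hsum : ∑ i : Fin n, ((-1 : ℤ) ^ ((i : ℕ) + 1)) •
            σ (coface i (fun j : Fin (n + 1) => htup g (p : ℕ) (j : ℕ))) =
            ((-1 : ℤ) ^ (p : ℕ)) • σ (fun j : Fin n =>
              if (j : ℕ) + 1 = (p : ℕ) then g j * g p
              else if j = p then (g j)⁻¹
              else if (j : ℕ) = (p : ℕ) + 1 then g p * g j else g j) +
            ((-1 : ℤ) ^ (p : ℕ)) • σ g := by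
          rw [← Finset.sum_subset (Finset.subset_univ
            {(⟨(p : ℕ) - 1, (show (p : ℕ) - 1 < n from by omega)⟩ : Fin n), ⟨(p : ℕ) + 1, hb⟩}) ?_]
          · rw [Finset.sum_pair hab, hcofa, hcofb]
            simp only [Fin.val_mk]
            rw [show (p : ℕ) - 1 + 1 = (p : ℕ) from by omega,
              show ((-1 : ℤ)) ^ ((p : ℕ) + 1 + 1) = ((-1 : ℤ)) ^ (p : ℕ) from by
                rw [pow_succ, pow_succ]; ring]
          · intro i _ hi
            simp only [Finset.mem_insert, Finset.mem_singleton] at hi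
            push_neg at hi
            obtain ⟨hia, hib⟩ := hi
            refine hterm i ?_ ?_
            · intro h; exact hib (Fin.ext (by simp only [Fin.val_mk]; omega))
            · intro h; exact hia (Fin.ext (by simp only [Fin.val_mk]; omega))
        have hinit : σ (fun j : Fin n => htup g (p : ℕ) (j : ℕ)) = 0 := by
          apply hS (p : ℕ) hb
          simp only [Fin.val_mk]
          rw [htup_q1, htup_le g (le_refl _)]
        rw [htail0, smul_zero, hsum, hinit, smul_zero, add_zero, zero_add] at hdh
        have key : σ (fun j : Fin n =>
            if (j : ℕ) + 1 = (p : ℕ) then g j * g p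
            else if j = p then (g j)⁻¹
            else if (j : ℕ) = (p : ℕ) + 1 then g p * g j else g j) + σ g = 0 := by
          have h5 := congrArg (fun x : A => ((-1 : ℤ) ^ (p : ℕ)) • x) hdh
          simp only [smul_add, smul_smul, smul_zero] at h5
          rw [← pow_add, Even.neg_one_pow ⟨(p : ℕ), rfl⟩, one_smul, one_smul] at h5
          exact h5
        exact eq_neg_of_add_eq_zero_right key
      · -- last transposition
        have hsum : ∑ i : Fin n, ((-1 : ℤ) ^ ((i : ℕ) + 1)) •
            σ (coface i (fun j : Fin (n + 1) => htup g (p : ℕ) (j : ℕ))) =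
            ((-1 : ℤ) ^ (p : ℕ)) • σ (fun j : Fin n =>
              if (j : ℕ) + 1 = (p : ℕ) then g j * g p
              else if j = p then (g j)⁻¹
              else if (j : ℕ) = (p : ℕ) + 1 then g p * g j else g j) := by
          rw [Finset.sum_eq_single_of_mem
            (⟨(p : ℕ) - 1, (show (p : ℕ) - 1 < n from by omega)⟩ : Fin n) (Finset.mem_univ _) ?_]
          · rw [hcofa]
            simp only [Fin.val_mk]
            rw [show (p : ℕ) - 1 + 1 = (p : ℕ) from by omega]
          · intro i _ hi
            refine hterm i (by have := i.isLt; omega) ?_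
            intro h; exact hi (Fin.ext (by simp only [Fin.val_mk]; omega))
        have hinitg : (fun j : Fin n => htup g (p : ℕ) (j : ℕ)) = g := by
          funext j; obtain ⟨v, hv⟩ := j
          simp only [Fin.val_mk]
          rw [htup_le g (by omega), gext_lt g hv]
        have hsgn : ((-1 : ℤ)) ^ (n + 1) = ((-1 : ℤ)) ^ (p : ℕ) := by
          rw [show n + 1 = (p : ℕ) + 1 + 1 from by omega, pow_succ, pow_succ]; ring
        rw [htail0, smul_zero, hsum, hinitg, hsgn, zero_add] at hdh
        have key : σ (fun j : Fin n =>
            if (j : ℕ) + 1 = (p : ℕ) then g j * g p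
            else if j = p then (g j)⁻¹
            else if (j : ℕ) = (p : ℕ) + 1 then g p * g j else g j) + σ g = 0 := by
          have h5 := congrArg (fun x : A => ((-1 : ℤ) ^ (p : ℕ)) • x) hdh
          simp only [smul_add, smul_smul, smul_zero] at h5
          rw [← pow_add, Even.neg_one_pow ⟨(p : ℕ), rfl⟩, one_smul, one_smul] at h5
          exact h5
        exact eq_neg_of_add_eq_zero_right key
end

section
/- Let G be a group, A a G-module with ₂A = 0. A 2-cochain σ : G² → A is a symmetric 2-coboundary if and only if σ = ∂¹β for some β : G → A with β(1) = 0 and σ(g, g⁻¹) = 0 for all g ∈ G. -/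
/-- For a `G`-module `A` with `₂A = 0`: a 2-cochain `σ` is a symmetric
2-coboundary (i.e. `σ = ∂¹β` for a symmetric 1-cochain `β`, one with
`β(g) = -g • β(g⁻¹)`) if and only if `σ = ∂¹β` for some `β` with `β(1) = 0` and
`σ(g, g⁻¹) = 0` for all `g ∈ G`.  Here `∂¹β(g₁,g₂) = g₁•β(g₂) - β(g₁g₂) + β(g₁)`. -/
theorem symmetric_two_coboundary_iff {G A : Type*} [Group G] [AddCommGroup A]
    [DistribMulAction G A] (h2 : ∀ a : A, a + a = 0 → a = 0) (σ : G → G → A) :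
    (∃ β : G → A, (∀ g : G, β g = -(g • β g⁻¹)) ∧
        ∀ g₁ g₂ : G, σ g₁ g₂ = g₁ • β g₂ - β (g₁ * g₂) + β g₁) ↔
    ((∃ β : G → A, β 1 = 0 ∧
        ∀ g₁ g₂ : G, σ g₁ g₂ = g₁ • β g₂ - β (g₁ * g₂) + β g₁) ∧
      ∀ g : G, σ g g⁻¹ = 0) := by
  constructor
  · rintro ⟨β, hsym, hcob⟩
    have hβ1 : β 1 = 0 := by
      apply h2
      have := hsym 1
      simp only [inv_one, one_smul] at this
      linear_combination (norm := abel) this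
    refine ⟨⟨β, hβ1, hcob⟩, fun g => ?_⟩
    rw [hcob g g⁻¹, mul_inv_cancel, hβ1]
    have := hsym g
    linear_combination (norm := abel) this
  · rintro ⟨⟨β, hβ1, hcob⟩, hdiag⟩
    refine ⟨β, fun g => ?_, hcob⟩
    have := hdiag g
    rw [hcob g g⁻¹, mul_inv_cancel, hβ1] at this
    linear_combination (norm := abel) this
end

section
/- Let G be a group, H a subgroup of finite index, A a G-module, and fix coset representatives c̄ for each c ∈ G/H with H̄ = 1. If σ : Hⁿ → A is a symmetric n-cochain, then the transfer tr_H^G(σ) : Gⁿ → A defined by tr_H^G(σ)(g₁,…,gₙ) = Σ_{c ∈ G/H} (x₁c)‾ · σ((x₁c)‾⁻¹ g₁ (x₂c)‾, …, (xₙc)‾⁻¹ gₙ c̄), where xᵢ = gᵢ⋯gₙ, is a symmetric n-cochain on G. -/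
variable {G A : Type*}

def prodFrom {G : Type*} [Group G] {n : ℕ} (g : Fin n → G) (i : ℕ) : G :=
  ((List.ofFn g).drop i).prod

theorem prodFrom_succ {G : Type*} [Group G] {n : ℕ} (g : Fin n → G) (i : ℕ)
    (h : i < n) : prodFrom g i = g ⟨i, h⟩ * prodFrom g (i + 1) := by
  unfold prodFrom
  rw [List.drop_eq_getElem_cons (by simpa using h), List.prod_cons]
  simp

theorem prodFrom_of_le {G : Type*} [Group G] {n : ℕ} (g : Fin n → G) (i : ℕ)
    (h : n ≤ i) : prodFrom g i = 1 := by
  unfold prodFrom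
  rw [List.drop_eq_nil_of_le (by simpa using h)]
  simp

theorem prodFrom_eq_of_eq_on {G : Type*} [Group G] {n : ℕ} (g g' : Fin n → G)
    (j m : ℕ) (hjm : j ≤ m)
    (h1 : ∀ i : Fin n, j ≤ (i:ℕ) → (i:ℕ) < m → g i = g' i)
    (h2 : prodFrom g m = prodFrom g' m) : prodFrom g j = prodFrom g' j := by
  obtain ⟨k, rfl⟩ := Nat.exists_eq_add_of_le hjm
  induction k generalizing j with
  | zero => simpa using h2
  | succ k ih =>
    by_cases hj : j < n
    · rw [prodFrom_succ g j hj, prodFrom_succ g' j hj,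
        h1 ⟨j, hj⟩ (by simp) (by simp), ih (j+1) (by omega)
          (fun i hi1 hi2 => h1 i (by omega) (by omega)) (by
            have e : j + 1 + k = j + (k+1) := by omega
            rw [e]; exact h2)]
    · rw [prodFrom_of_le g j (by omega), prodFrom_of_le g' j (by omega)]

def transferCochain {G A : Type*} [Group G] [AddCommGroup A] [DistribMulAction G A]
    (H : Subgroup G) [Fintype (G ⧸ H)] (rep : G ⧸ H → G)
    (hrep : ∀ c : G ⧸ H, (QuotientGroup.mk (rep c) : G ⧸ H) = c)
    {n : ℕ} (σ : (Fin n → H) → A) : (Fin n → G) → A :=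
  fun g => ∑ c : G ⧸ H,
    rep (prodFrom g 0 • c) •
      σ (fun i =>
        ⟨(rep (prodFrom g (i : ℕ) • c))⁻¹ * g i * rep (prodFrom g ((i : ℕ) + 1) • c), by
          have h1 : (QuotientGroup.mk (rep (prodFrom g (i : ℕ) • c)) : G ⧸ H)
              = prodFrom g (i : ℕ) • c := hrep _
          have h2 : (QuotientGroup.mk (g i * rep (prodFrom g ((i : ℕ) + 1) • c)) : G ⧸ H)
              = prodFrom g (i : ℕ) • c := by
            calc (QuotientGroup.mk (g i * rep (prodFrom g ((i : ℕ) + 1) • c)) : G ⧸ H)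
                = g i • (QuotientGroup.mk (rep (prodFrom g ((i : ℕ) + 1) • c))) := rfl
              _ = g i • (prodFrom g ((i : ℕ) + 1) • c) := by rw [hrep _]
              _ = prodFrom g (i : ℕ) • c := by
                  rw [← mul_smul, ← prodFrom_succ g (i : ℕ) i.isLt]
          have h3 := QuotientGroup.eq.mp (h1.trans h2.symm)
          simpa [mul_assoc] using h3⟩)

/-- If `σ` is a symmetric `n`-cochain on a finite-index subgroup `H ≤ G`, then
its transfer `tr_H^G(σ)(g₁,…,gₙ) = Σ_{c ∈ G/H} (x₁c)‾ • σ((x₁c)‾⁻¹g₁(x₂c)‾, …,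
(xₙc)‾⁻¹gₙc̄)` (for a chosen system of coset representatives with `H̄ = 1`) is a
symmetric `n`-cochain on `G`. -/
theorem transferCochain_isSymmCochain [Group G] [AddCommGroup A]
    [DistribMulAction G A] (H : Subgroup G) [Fintype (G ⧸ H)] (rep : G ⧸ H → G)
    (hrep : ∀ c : G ⧸ H, (QuotientGroup.mk (rep c) : G ⧸ H) = c)
    (hrep1 : rep (QuotientGroup.mk 1) = 1)
    {n : ℕ} (σ : (Fin n → H) → A) (hσ : IsSymmCochain σ) :
    IsSymmCochain (transferCochain H rep hrep σ) := by
  intro p g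
  by_cases hp0 : (p : ℕ) = 0
  · obtain ⟨g', hg'⟩ : ∃ g' : Fin n → G, g' = fun (j : Fin n) =>
        if (j:ℕ) = 0 then (g j)⁻¹
        else if (j:ℕ) = 1 then g p * g j
        else g j := ⟨_, rfl⟩
    have hswap : swapAct p (transferCochain H rep hrep σ) g
        = -(g p • transferCochain H rep hrep σ g') := by
      rw [hg']; simp only [swapAct, if_pos hp0]
    rw [hswap]
    have hgv : ∀ (j : Fin n), g' j =
        if (j:ℕ) = 0 then (g j)⁻¹
        else if (j:ℕ) = 1 then g p * g j
        else g j := fun j => by rw [hg']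
    have hn : 0 < n := p.pos
    have hp' : (⟨0, hn⟩ : Fin n) = p := by apply Fin.ext; simp [hp0]
    have hx0 : prodFrom g 0 = g p * prodFrom g 1 := by
      rw [prodFrom_succ g 0 hn, hp']
    by_cases hn1 : n = 1
    · -- case b : p = 0, n = 1
      have hgone : prodFrom g 1 = 1 := prodFrom_of_le g _ (by omega)
      have hgone' : prodFrom g' 1 = 1 := prodFrom_of_le g' _ (by omega)
      have hx0b : prodFrom g 0 = g p := by rw [hx0, hgone, mul_one]
      have k0b : prodFrom g' 0 = (g p)⁻¹ := by
        rw [prodFrom_succ g' 0 hn, hgone', mul_one, hgv, if_pos (by simp), hp']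
      simp only [transferCochain]
      rw [Finset.smul_sum, ← Finset.sum_neg_distrib]
      refine Fintype.sum_equiv (MulAction.toPerm (g p)) _ _ (fun c => ?_)
      have hinv : (g p)⁻¹ • (g p • c) = c := by
        rw [smul_smul, inv_mul_cancel, one_smul]
      conv_lhs => rw [hσ p]
      simp only [swapAct, if_pos hp0, MulAction.toPerm_apply]
      rw [smul_neg]
      congr 1
      rw [Submonoid.smul_def, smul_smul, smul_smul]
      congr 1
      · show rep (prodFrom g 0 • c) *
            ((rep (prodFrom g (p:ℕ) • c))⁻¹ * g p * rep (prodFrom g ((p:ℕ)+1) • c))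
            = g p * rep (prodFrom g' 0 • (g p • c))
        rw [hp0, zero_add, hgone, one_smul, k0b, hinv, hx0b]
        group
      · congr 1
        funext i
        apply Subtype.ext
        have h1 : (i:ℕ) = 0 := by have := i.isLt; omega
        have hip : i = p := Fin.ext (by omega)
        rw [if_pos h1]
        simp only [Subgroup.coe_mul, InvMemClass.coe_inv]
        rw [hip, hp0, zero_add, hgone, hgone', one_smul, one_smul, hx0b, k0b, hinv, hgv p, if_pos hp0]
        group
    · -- case a : p = 0, 2 ≤ n
      have h1n : 1 < n := by omega
      have kge : ∀ j : ℕ, 2 ≤ j → prodFrom g' j = prodFrom g j := by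
        intro j hj
        rcases le_or_gt n j with h | h
        · rw [prodFrom_of_le _ _ h, prodFrom_of_le _ _ h]
        · exact prodFrom_eq_of_eq_on g' g j n (le_of_lt h)
            (fun i hi1 hi2 => by
              rw [hgv i, if_neg (by omega), if_neg (by omega)])
            (by rw [prodFrom_of_le _ _ le_rfl, prodFrom_of_le _ _ le_rfl])
      have k1 : prodFrom g' 1 = g p * prodFrom g 1 := by
        rw [prodFrom_succ g' 1 h1n, prodFrom_succ g 1 h1n, kge _ le_rfl, hgv,
          if_neg (by simp), if_pos (by simp), mul_assoc]
      have k0 : prodFrom g' 0 = prodFrom g 1 := by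
        rw [prodFrom_succ g' 0 hn, k1, hgv, if_pos (by simp), hp', ← mul_assoc,
          inv_mul_cancel, one_mul]
      simp only [transferCochain]
      rw [Finset.smul_sum, ← Finset.sum_neg_distrib]
      refine Finset.sum_congr rfl (fun c _ => ?_)
      conv_lhs => rw [hσ p]
      simp only [swapAct, if_pos hp0]
      rw [smul_neg]
      congr 1
      rw [Submonoid.smul_def, smul_smul, smul_smul, k0]
      congr 1
      · show rep (prodFrom g 0 • c) *
            ((rep (prodFrom g (p:ℕ) • c))⁻¹ * g p * rep (prodFrom g ((p:ℕ)+1) • c))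
            = g p * rep (prodFrom g 1 • c)
        rw [hp0, zero_add]
        group
      · congr 1
        funext i
        apply Subtype.ext
        by_cases h1 : (i:ℕ) = 0
        · rw [if_pos h1]
          simp only [Subgroup.coe_mul, InvMemClass.coe_inv]
          rw [h1, zero_add, k0, k1, ← hx0, hgv i, if_pos h1]
          group
        · rw [if_neg h1]
          by_cases h2 : (i:ℕ) = 1
          · rw [if_pos h2]
            simp only [Subgroup.coe_mul, InvMemClass.coe_inv]
            rw [hp0, zero_add, h2, k1, ← hx0, kge (1+1) (by norm_num),
              hgv i, if_neg h1, if_pos h2]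
            group
          · rw [if_neg h2]
            simp only [Subgroup.coe_mul, InvMemClass.coe_inv]
            rw [kge (i:ℕ) (by omega), kge ((i:ℕ)+1) (by omega),
              hgv i, if_neg h1, if_neg h2]
  · obtain ⟨g', hg'⟩ : ∃ g' : Fin n → G, g' = fun (j : Fin n) =>
        if (j:ℕ) + 1 = (p:ℕ) then g j * g p
        else if j = p then (g j)⁻¹
        else if (j:ℕ) = (p:ℕ) + 1 then g p * g j
        else g j := ⟨_, rfl⟩
    have hswap : swapAct p (transferCochain H rep hrep σ) g
        = -(transferCochain H rep hrep σ g') := by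
      rw [hg']; simp only [swapAct, if_neg hp0]
    rw [hswap]
    have hgv : ∀ (j : Fin n), g' j =
        if (j:ℕ) + 1 = (p:ℕ) then g j * g p
        else if (j:ℕ) = (p:ℕ) then (g j)⁻¹
        else if (j:ℕ) = (p:ℕ) + 1 then g p * g j
        else g j := by
      intro j; rw [hg']
      rcases eq_or_ne j p with h | h
      · subst h; simp
      · have h' : (j:ℕ) ≠ (p:ℕ) := fun hh => h (Fin.ext hh)
        simp only [if_neg h, if_neg h']
    have hple : (p:ℕ) + 1 ≤ n := p.isLt
    have hxp : prodFrom g (p:ℕ) = g p * prodFrom g ((p:ℕ)+1) := by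
      rw [prodFrom_succ g (p:ℕ) p.isLt, Fin.eta]
    have kge : ∀ j : ℕ, (p:ℕ) + 2 ≤ j → prodFrom g' j = prodFrom g j := by
      intro j hj
      rcases le_or_gt n j with h | h
      · rw [prodFrom_of_le _ _ h, prodFrom_of_le _ _ h]
      · exact prodFrom_eq_of_eq_on g' g j n (le_of_lt h)
          (fun i hi1 hi2 => by
            rw [hgv i, if_neg (by omega), if_neg (by omega), if_neg (by omega)])
          (by rw [prodFrom_of_le _ _ le_rfl, prodFrom_of_le _ _ le_rfl])
    by_cases hpn : (p:ℕ) + 1 = n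
    · -- case d : 1 ≤ p, p + 1 = n
      have hx1 : prodFrom g ((p:ℕ)+1) = 1 := prodFrom_of_le g _ (by omega)
      have hxp' : prodFrom g (p:ℕ) = g p := by rw [hxp, hx1, mul_one]
      have kd2 : prodFrom g' (p:ℕ) = (g p)⁻¹ := by
        rw [prodFrom_succ g' _ p.isLt, prodFrom_of_le g' _ (by omega), hgv,
          if_neg (by simp), if_pos (by simp), mul_one]
      have kd1 : ∀ k j, j + k + 1 = (p:ℕ) → prodFrom g' j = prodFrom g j * (g p)⁻¹ := by
        intro k
        induction k with
        | zero =>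
          intro j hj
          have hjn : j < n := by omega
          have hj' : j + 1 = (p:ℕ) := by omega
          rw [prodFrom_succ g' j hjn, prodFrom_succ g j hjn, hj', kd2, hxp', hgv,
            if_pos (by simp [hj'])]
        | succ k ih =>
          intro j hj
          have hjn : j < n := by omega
          rw [prodFrom_succ g' j hjn, prodFrom_succ g j hjn, ih (j+1) (by omega),
            hgv, if_neg (by simp; omega), if_neg (by simp; omega),
            if_neg (by simp; omega), mul_assoc]
      have hcj : ∀ (j : ℕ) (c : G ⧸ H), j < (p:ℕ) →
          prodFrom g' j • (g p • c) = prodFrom g j • c := by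
        intro j c hj
        rw [kd1 ((p:ℕ) - j - 1) j (by omega), smul_smul, mul_assoc,
          inv_mul_cancel, mul_one]
      have hcp : ∀ c : G ⧸ H, prodFrom g' (p:ℕ) • (g p • c) = c := by
        intro c
        rw [kd2, smul_smul, inv_mul_cancel, one_smul]
      have hcp1 : ∀ c : G ⧸ H, prodFrom g' ((p:ℕ)+1) • (g p • c) = g p • c := by
        intro c
        rw [prodFrom_of_le g' _ (by omega), one_smul]
      simp only [transferCochain]
      rw [← Finset.sum_neg_distrib]
      refine Fintype.sum_equiv (MulAction.toPerm (g p)) _ _ (fun c => ?_)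
      conv_lhs => rw [hσ p]
      simp only [swapAct, if_neg hp0, MulAction.toPerm_apply]
      rw [smul_neg, hcj 0 c (by omega)]
      congr 2
      congr 1
      funext i
      apply Subtype.ext
      by_cases h1 : (i:ℕ) + 1 = (p:ℕ)
      · rw [if_pos h1]
        simp only [Subgroup.coe_mul, InvMemClass.coe_inv]
        rw [hgv i, if_pos h1, h1, hcp c, hcj (i:ℕ) c (by omega), hx1, one_smul]
        group
      · rw [if_neg h1]
        by_cases h2 : i = p
        · subst h2
          rw [if_pos rfl]
          simp only [Subgroup.coe_mul, InvMemClass.coe_inv]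
          rw [hgv i, if_neg (by simp), if_pos rfl, hcp c, hcp1 c, hx1,
            one_smul, hxp']
          group
        · rw [if_neg h2]
          have h2' : (i:ℕ) ≠ (p:ℕ) := fun hh => h2 (Fin.ext hh)
          have hip : (i:ℕ) < (p:ℕ) := by have := i.isLt; omega
          rw [if_neg (by omega)]
          simp only [Subgroup.coe_mul, InvMemClass.coe_inv]
          rw [hgv i, if_neg h1, if_neg h2', if_neg (by omega),
            hcj (i:ℕ) c (by omega), hcj ((i:ℕ)+1) c (by omega)]
    · -- case c : 1 ≤ p, p + 1 < n
      have hplt : (p:ℕ) + 1 < n := lt_of_le_of_ne hple hpn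
      have kp1 : prodFrom g' ((p:ℕ)+1) = g p * prodFrom g ((p:ℕ)+1) := by
        rw [prodFrom_succ g' _ hplt, prodFrom_succ g _ hplt, kge _ le_rfl,
          hgv, if_neg (by simp; omega), if_neg (by simp), if_pos (by simp),
          mul_assoc]
      have kp : prodFrom g' (p:ℕ) = prodFrom g ((p:ℕ)+1) := by
        rw [prodFrom_succ g' _ p.isLt, kp1, hgv, if_neg (by simp),
          if_pos (by simp), ← mul_assoc]
        simp
      have klow : ∀ j : ℕ, j < (p:ℕ) → prodFrom g' j = prodFrom g j := by
        have hbase : prodFrom g' ((p:ℕ) - 1) = prodFrom g ((p:ℕ)-1) := by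
          have hlt : (p:ℕ) - 1 < n := by omega
          rw [prodFrom_succ g' _ hlt, prodFrom_succ g _ hlt]
          have e : (p:ℕ) - 1 + 1 = (p:ℕ) := by omega
          rw [e, kp, hgv, if_pos (by simp [e]), hxp, ← mul_assoc]
        intro j hj
        rcases eq_or_lt_of_le (Nat.le_sub_one_of_lt hj) with h | h
        · rw [h]; exact hbase
        · exact prodFrom_eq_of_eq_on g' g j ((p:ℕ)-1) (by omega)
            (fun i hi1 hi2 => by
              rw [hgv i, if_neg (by omega), if_neg (by omega), if_neg (by omega)])
            hbase
      have key : ∀ j : ℕ, prodFrom g' j =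
          if j = (p:ℕ) then prodFrom g ((p:ℕ)+1)
          else if j = (p:ℕ)+1 then g p * prodFrom g ((p:ℕ)+1)
          else prodFrom g j := by
        intro j
        by_cases h1 : j = (p:ℕ)
        · rw [if_pos h1, h1, kp]
        · rw [if_neg h1]
          by_cases h2 : j = (p:ℕ)+1
          · rw [if_pos h2, h2, kp1]
          · rw [if_neg h2]
            rcases lt_or_ge j (p:ℕ) with h | h
            · exact klow j h
            · exact kge j (by omega)
      simp only [transferCochain]
      rw [← Finset.sum_neg_distrib]
      refine Finset.sum_congr rfl (fun c _ => ?_)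
      conv_lhs => rw [hσ p]
      simp only [swapAct, if_neg hp0]
      rw [smul_neg]
      have h0 : prodFrom g' 0 = prodFrom g 0 := klow 0 (by omega)
      rw [h0]
      congr 2
      congr 1
      funext i
      apply Subtype.ext
      by_cases h1 : (i:ℕ) + 1 = (p:ℕ)
      · rw [if_pos h1]
        simp only [Subgroup.coe_mul, InvMemClass.coe_inv]
        rw [key (i:ℕ), if_neg (by omega), if_neg (by omega),
          key ((i:ℕ)+1), if_pos h1, hgv i, if_pos h1, h1]
        group
      · rw [if_neg h1]
        by_cases h2 : i = p
        · subst h2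
          rw [if_pos rfl]
          simp only [Subgroup.coe_mul, InvMemClass.coe_inv]
          rw [key (i:ℕ), if_pos rfl, key ((i:ℕ)+1), if_neg (by omega), if_pos rfl,
            hgv i, if_neg (by omega), if_pos rfl, ← hxp]
          group
        · rw [if_neg h2]
          have h2' : (i:ℕ) ≠ (p:ℕ) := fun hh => h2 (Fin.ext hh)
          by_cases h3 : (i:ℕ) = (p:ℕ)+1
          · rw [if_pos h3]
            simp only [Subgroup.coe_mul, InvMemClass.coe_inv]
            rw [key (i:ℕ), if_neg h2', if_pos h3, key ((i:ℕ)+1),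
              if_neg (by omega), if_neg (by omega), ← hxp,
              hgv i, if_neg (by omega), if_neg h2', if_pos h3, h3]
            group
          · rw [if_neg h3]
            simp only [Subgroup.coe_mul, InvMemClass.coe_inv]
            rw [key (i:ℕ), if_neg h2', if_neg h3, key ((i:ℕ)+1), if_neg h1,
              if_neg (by omega), hgv i, if_neg h1, if_neg h2', if_neg h3]
end
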